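/- Suppose |a|_p > α = β for f(x)=(ax²+bx)/(x²+dx+b) on ℂ_p. Then the fixed point x₂ = a-d satisfies |x₂|_p = |a|_p and |f'(x₂)|_p < 1 (x₂ is attracting). Moreover, for every x in the sphere S_{|a|_p}(0) not eventually mapped to a pole, |f(x)-x₂|_p < |x-x₂|_p. -/

import Mathlib

open IsUltrametricDist in
/-- In an ultrametric field, if `‖v‖ < ‖u‖` then `‖u + v‖ = ‖u‖`. -/
lemma my_norm_add_eq {K : Type*} [NontriviallyNormedField K] [IsUltrametricDist K]
    {u v : K} (h : ‖v‖ < ‖u‖) : ‖u + v‖ = ‖u‖ := by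
  refine le_antisymm ((norm_add_le_max u v).trans (max_le le_rfl h.le)) ?_
  by_contra hc
  push_neg at hc
  have := (norm_add_le_max (u + v) (-v)).trans_lt (max_lt hc (by simpa using h))
  simp at this

/-- Case `|a| > α = β`: `x₂ = a - d` satisfies `|x₂| = |a|` and
`|f'(x₂)| < 1`; moreover on the sphere `S_{|a|}(0)` (minus `x₂` itself)
one has `|f(x) - x₂| < |x - x₂|`. -/
theorem stmt10 {K : Type*} [NontriviallyNormedField K] [IsAlgClosed K]
    [IsUltrametricDist K] (a b d z₁ z₂ : K) (hab : a*b ≠ 0) (had : a ≠ d)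
    (hsum : z₁ + z₂ = -d) (hprod : z₁ * z₂ = b)
    (hβ : ‖z₂‖ = ‖z₁‖) (ha : ‖z₁‖ < ‖a‖) :
    ‖a - d‖ = ‖a‖ ∧
    (∃ L : K, HasDerivAt (fun x : K => (a*x^2 + b*x)/(x^2 + d*x + b)) L (a - d) ∧
      ‖L‖ < 1) ∧
    ∀ x : K, ‖x‖ = ‖a‖ → x ≠ a - d →
      ‖(a*x^2 + b*x)/(x^2 + d*x + b) - (a - d)‖ < ‖x - (a - d)‖ := by
  have ha0 : a ≠ 0 := fun h => hab (by simp [h])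
  have hb0 : b ≠ 0 := fun h => hab (by simp [h])
  set α := ‖z₁‖ with hα
  have hA : (0:ℝ) < ‖a‖ := norm_pos_iff.mpr ha0
  have hα0 : 0 ≤ α := norm_nonneg _
  have hb : ‖b‖ = α * α := by rw [← hprod, norm_mul, hβ]
  have hd : ‖d‖ ≤ α := by
    have : ‖z₁ + z₂‖ ≤ α :=
      (IsUltrametricDist.norm_add_le_max _ _).trans (max_le le_rfl hβ.le)
    simpa [hsum] using this
  have hdA : ‖d‖ < ‖a‖ := hd.trans_lt ha
  -- ‖a - d‖ = ‖a‖
  have hx2 : ‖a - d‖ = ‖a‖ := by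
    have := my_norm_add_eq (u := a) (v := -d) (by simpa using hdA)
    simpa [sub_eq_add_neg] using this
  -- key norm fact: denominator at any point of norm ‖a‖
  have hden : ∀ x : K, ‖x‖ = ‖a‖ → ‖x^2 + d*x + b‖ = ‖a‖^2 := by
    intro x hx
    have h1 : ‖d*x + b‖ < ‖x^2‖ := by
      rw [norm_pow, hx]
      have h2 : ‖d*x‖ < ‖a‖^2 := by
        rw [norm_mul, hx, sq]
        exact mul_lt_mul_of_pos_right hdA hA
      have h3 : ‖b‖ < ‖a‖^2 := by
        rw [hb, sq]
        exact mul_lt_mul' ha.le ha hα0 hA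
      exact (IsUltrametricDist.norm_add_le_max _ _).trans_lt (max_lt h2 h3)
    have := my_norm_add_eq h1
    rw [← add_assoc] at this
    rw [this, norm_pow, hx]
  have hdenx2 : ‖(a-d)^2 + d*(a-d) + b‖ = ‖a‖^2 := hden _ hx2
  have hden0 : ∀ x : K, ‖x‖ = ‖a‖ → x^2 + d*x + b ≠ 0 := by
    intro x hx h
    have := hden x hx
    rw [h, norm_zero] at this
    exact (pow_pos hA 2).ne this
  -- bound on ‖d*x + b‖ for ‖x‖ = ‖a‖
  have hnum : ∀ x : K, ‖x‖ = ‖a‖ → ‖d*x + b‖ ≤ α * ‖a‖ := by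
    intro x hx
    refine (IsUltrametricDist.norm_add_le_max _ _).trans (max_le ?_ ?_)
    · rw [norm_mul, hx]; exact mul_le_mul_of_nonneg_right hd hA.le
    · rw [hb]; exact mul_le_mul_of_nonneg_left ha.le hα0
  have hratio : α / ‖a‖ < 1 := (div_lt_one hA).mpr ha
  refine ⟨hx2, ?_, ?_⟩
  · -- derivative
    set x₂ := a - d with hx2def
    have hg : HasDerivAt (fun x : K => a*x^2 + b*x) (2*a*x₂ + b) x₂ := by
      have h1 : HasDerivAt (fun x : K => a*x^2) (a * (2*x₂)) x₂ :=
        ((hasDerivAt_pow 2 x₂).const_mul a).congr_deriv (by ring)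
      have h2 : HasDerivAt (fun x : K => b*x) b x₂ := by
        simpa using (hasDerivAt_id x₂).const_mul b
      exact (h1.add h2).congr_deriv (by ring)
    have hh : HasDerivAt (fun x : K => x^2 + d*x + b) (2*x₂ + d) x₂ := by
      have h1 : HasDerivAt (fun x : K => x^2) (2*x₂) x₂ := by
        simpa using hasDerivAt_pow 2 x₂
      have h2 : HasDerivAt (fun x : K => d*x) d x₂ := by
        simpa using (hasDerivAt_id x₂).const_mul d
      exact ((h1.add h2).add_const b).congr_deriv (by ring)
    have hden' : x₂^2 + d*x₂ + b ≠ 0 := hden0 _ hx2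
    have hder := hg.div hh hden'
    refine ⟨_, hder, ?_⟩
    have hNval : (2*a*x₂ + b) * (x₂^2 + d*x₂ + b) - (a*x₂^2 + b*x₂) * (2*x₂ + d)
        = (a*d - b)*x₂^2 + 2*a*b*x₂ + b^2 := by ring
    have hNnorm : ‖(a*d - b)*x₂^2 + 2*a*b*x₂ + b^2‖ ≤ α * ‖a‖^3 := by
      have e1 : ‖(a*d - b)*x₂^2‖ ≤ α * ‖a‖^3 := by
        rw [norm_mul, norm_pow, hx2]
        have : ‖a*d - b‖ ≤ α * ‖a‖ := by
          rw [sub_eq_add_neg]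
          refine (IsUltrametricDist.norm_add_le_max _ _).trans (max_le ?_ ?_)
          · rw [norm_mul, mul_comm ‖a‖ ‖d‖]
            exact mul_le_mul_of_nonneg_right hd hA.le
          · rw [norm_neg, hb]; exact mul_le_mul_of_nonneg_left ha.le hα0
        calc ‖a*d-b‖ * ‖a‖^2 ≤ (α * ‖a‖) * ‖a‖^2 := by
              exact mul_le_mul_of_nonneg_right this (by positivity)
          _ = α * ‖a‖^3 := by ring
      have e2 : ‖2*a*b*x₂‖ ≤ α * ‖a‖^3 := by
        have h2 : ‖(2:K)‖ ≤ 1 := IsUltrametricDist.norm_natCast_le_one K 2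
        calc ‖2*a*b*x₂‖ = ‖(2:K)‖ * (‖a‖ * ‖b‖ * ‖x₂‖) := by
              rw [norm_mul, norm_mul, norm_mul]; ring
          _ ≤ 1 * (‖a‖ * ‖b‖ * ‖x₂‖) := by
              refine mul_le_mul_of_nonneg_right h2 (by positivity)
          _ = ‖a‖ * (α*α) * ‖a‖ := by rw [one_mul, hb, hx2]
          _ = (α * ‖a‖) * (α * ‖a‖) := by ring
          _ ≤ (α * ‖a‖) * (‖a‖ * ‖a‖) := by
              refine mul_le_mul_of_nonneg_left ?_ (by positivity)
              exact mul_le_mul_of_nonneg_right ha.le hA.le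
          _ = α * ‖a‖^3 := by ring
      have e3 : ‖b^2‖ ≤ α * ‖a‖^3 := by
        rw [norm_pow, hb]
        calc (α*α)^2 = (α*α)*(α*α) := by ring
          _ ≤ (α*‖a‖)*(‖a‖*‖a‖) := by
              refine mul_le_mul ?_ ?_ (by positivity) (by positivity)
              · exact mul_le_mul_of_nonneg_left ha.le hα0
              · exact mul_le_mul ha.le ha.le hα0 hA.le
          _ = α * ‖a‖^3 := by ring
      refine (IsUltrametricDist.norm_add_le_max _ _).trans (max_le ?_ e3)
      exact (IsUltrametricDist.norm_add_le_max _ _).trans (max_le e1 e2)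
    rw [norm_div, hNval, norm_pow, hdenx2]
    calc ‖(a*d - b)*x₂^2 + 2*a*b*x₂ + b^2‖ / (‖a‖^2)^2
        ≤ (α * ‖a‖^3) / (‖a‖^2)^2 := by
          exact div_le_div_of_nonneg_right hNnorm (by positivity)
      _ = α / ‖a‖ := by field_simp
      _ < 1 := hratio
  · intro x hx hxne
    have hden' : x^2 + d*x + b ≠ 0 := hden0 x hx
    have key : (a*x^2 + b*x)/(x^2 + d*x + b) - (a - d)
        = (x - (a - d)) * (d*x + b) / (x^2 + d*x + b) := by
      rw [eq_div_iff hden', sub_mul, div_mul_cancel₀ _ hden']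
      ring
    have hxx2 : (0:ℝ) < ‖x - (a - d)‖ := by
      rw [norm_pos_iff]; exact sub_ne_zero_of_ne hxne
    rw [key, norm_div, norm_mul, hden x hx]
    calc ‖x - (a-d)‖ * ‖d*x + b‖ / ‖a‖^2
        ≤ ‖x - (a-d)‖ * (α * ‖a‖) / ‖a‖^2 := by
          refine div_le_div_of_nonneg_right ?_ (by positivity)
          exact mul_le_mul_of_nonneg_left (hnum x hx) hxx2.le
      _ = ‖x - (a-d)‖ * (α / ‖a‖) := by field_simp
      _ < ‖x - (a-d)‖ * 1 := by
          exact mul_lt_mul_of_pos_left hratio hxx2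
      _ = ‖x - (a-d)‖ := mul_one _
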